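/- Let 0<λ≤1 and f(z) = z/((1-ω(z))(1-λω(z))) for a Schwarz function ω with coefficients c₁,c₂,c₃. If f⁻¹(w)=w+A₂w²+A₃w³+A₄w⁴+⋯ is the local inverse of f at 0, then A₂=-(1+λ)c₁, A₃=-(1+λ)c₂+(1+3λ+λ²)c₁², and A₄=-(1+λ)c₃+(3+8λ+3λ²)c₁c₂-(1+λ)(1+5λ+λ²)c₁³. -/

import Mathlib

open Metric Filter


private lemma analyticAt_deriv' {f : ℂ → ℂ} {x : ℂ} (h : AnalyticAt ℂ f x) :
    AnalyticAt ℂ (deriv f) x := by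
  obtain ⟨s, hs, hf⟩ := h.eventually_analyticAt.exists_mem
  exact (AnalyticOnNhd.deriv (fun y hy => hf y hy)) x (mem_of_mem_nhds hs)

private lemma ev_diff' {f : ℂ → ℂ} (h : AnalyticAt ℂ f 0) :
    ∀ᶠ x in nhds (0:ℂ), DifferentiableAt ℂ f x :=
  h.eventually_analyticAt.mono fun _ hy => hy.differentiableAt

private lemma hasDerivAt_deriv_eq {f : ℂ → ℂ} {v v' : ℂ} {x : ℂ} (h : HasDerivAt f v x)
    (hv : v = v') : deriv f x = v' := hv ▸ h.deriv

private lemma master_vals (lamc : ℂ) (φ : ℂ → ℂ) (hφ : AnalyticAt ℂ φ 0) (hφ0 : φ 0 = 0)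
    (g : ℂ → ℂ)
    (hgf : g =ᶠ[nhds (0:ℂ)] fun w => w * (1 - (1 + lamc) * φ w + lamc * φ w ^ 2)) :
    deriv g 0 = 1 ∧
    iteratedDeriv 2 g 0 = 2 * (-(1 + lamc) * deriv φ 0) ∧
    iteratedDeriv 3 g 0 =
      3 * (-(1 + lamc) * iteratedDeriv 2 φ 0 + 2 * lamc * (deriv φ 0) ^ 2) ∧
    iteratedDeriv 4 g 0 =
      4 * (-(1 + lamc) * iteratedDeriv 3 φ 0 + 6 * lamc * deriv φ 0 * iteratedDeriv 2 φ 0) := by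
  have hφ1 : AnalyticAt ℂ (deriv φ) 0 := analyticAt_deriv' hφ
  have hφ2 : AnalyticAt ℂ (deriv (deriv φ)) 0 := analyticAt_deriv' hφ1
  have hψ : AnalyticAt ℂ (fun w => 1 - (1 + lamc) * φ w + lamc * φ w ^ 2) 0 :=
    ((analyticAt_const).sub ((analyticAt_const).mul hφ)).add ((analyticAt_const).mul (hφ.pow 2))
  have hψ1 : AnalyticAt ℂ (deriv (fun w => 1 - (1 + lamc) * φ w + lamc * φ w ^ 2)) 0 :=
    analyticAt_deriv' hψ
  have hψ2 : AnalyticAt ℂ (deriv (deriv (fun w => 1 - (1 + lamc) * φ w + lamc * φ w ^ 2))) 0 :=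
    analyticAt_deriv' hψ1
  have hψ3 : AnalyticAt ℂ
      (deriv (deriv (deriv (fun w => 1 - (1 + lamc) * φ w + lamc * φ w ^ 2)))) 0 :=
    analyticAt_deriv' hψ2
  -- ψ ladder
  have B1 : deriv (fun w => 1 - (1 + lamc) * φ w + lamc * φ w ^ 2) =ᶠ[nhds (0:ℂ)]
      fun w => -(1 + lamc) * deriv φ w + lamc * (2 * φ w * deriv φ w) := by
    filter_upwards [ev_diff' hφ] with x hx
    exact hasDerivAt_deriv_eq
      (((hasDerivAt_const x (1:ℂ)).sub (hx.hasDerivAt.const_mul (1 + lamc))).add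
        ((hx.hasDerivAt.pow 2).const_mul lamc)) (by push_cast; ring)
  have B2 : deriv (deriv (fun w => 1 - (1 + lamc) * φ w + lamc * φ w ^ 2)) =ᶠ[nhds (0:ℂ)]
      fun w => -(1 + lamc) * deriv (deriv φ) w
        + lamc * (2 * (deriv φ w ^ 2 + φ w * deriv (deriv φ) w)) := by
    refine B1.deriv.trans ?_
    filter_upwards [ev_diff' hφ, ev_diff' hφ1] with x hx h1
    exact hasDerivAt_deriv_eq
      ((h1.hasDerivAt.const_mul (-(1 + lamc))).add
        (((hx.hasDerivAt.const_mul (2:ℂ)).mul h1.hasDerivAt).const_mul lamc)) (by ring)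
  have B3 : deriv (deriv (deriv (fun w => 1 - (1 + lamc) * φ w + lamc * φ w ^ 2)))
      =ᶠ[nhds (0:ℂ)]
      fun w => -(1 + lamc) * deriv (deriv (deriv φ)) w
        + lamc * (6 * deriv φ w * deriv (deriv φ) w + 2 * φ w * deriv (deriv (deriv φ)) w) := by
    refine B2.deriv.trans ?_
    filter_upwards [ev_diff' hφ, ev_diff' hφ1, ev_diff' hφ2] with x hx h1 h2
    exact hasDerivAt_deriv_eq
      ((h2.hasDerivAt.const_mul (-(1 + lamc))).add
        ((((h1.hasDerivAt.pow 2).add (hx.hasDerivAt.mul h2.hasDerivAt)).const_mul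
          (2:ℂ)).const_mul lamc)) (by push_cast; ring)
  -- g ladder
  have G1 : deriv g =ᶠ[nhds (0:ℂ)] fun w =>
      (1 - (1 + lamc) * φ w + lamc * φ w ^ 2)
        + w * deriv (fun w => 1 - (1 + lamc) * φ w + lamc * φ w ^ 2) w := by
    refine hgf.deriv.trans ?_
    filter_upwards [ev_diff' hψ] with x hx
    exact hasDerivAt_deriv_eq ((hasDerivAt_id x).mul hx.hasDerivAt)
      (by simp only [id_eq, one_mul])
  have G2 : deriv (deriv g) =ᶠ[nhds (0:ℂ)] fun w =>
      deriv (fun w => 1 - (1 + lamc) * φ w + lamc * φ w ^ 2) w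
        + (deriv (fun w => 1 - (1 + lamc) * φ w + lamc * φ w ^ 2) w
          + w * deriv (deriv (fun w => 1 - (1 + lamc) * φ w + lamc * φ w ^ 2)) w) := by
    refine G1.deriv.trans ?_
    filter_upwards [ev_diff' hψ, ev_diff' hψ1] with x hx h1
    exact hasDerivAt_deriv_eq
      (hx.hasDerivAt.add ((hasDerivAt_id x).mul h1.hasDerivAt))
      (by simp only [id_eq, one_mul])
  have G3 : deriv (deriv (deriv g)) =ᶠ[nhds (0:ℂ)] fun w =>
      deriv (deriv (fun w => 1 - (1 + lamc) * φ w + lamc * φ w ^ 2)) w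
        + (deriv (deriv (fun w => 1 - (1 + lamc) * φ w + lamc * φ w ^ 2)) w
          + (deriv (deriv (fun w => 1 - (1 + lamc) * φ w + lamc * φ w ^ 2)) w
            + w * deriv (deriv (deriv (fun w => 1 - (1 + lamc) * φ w + lamc * φ w ^ 2))) w)) := by
    refine G2.deriv.trans ?_
    filter_upwards [ev_diff' hψ1, ev_diff' hψ2] with x h1 h2
    exact hasDerivAt_deriv_eq
      (h1.hasDerivAt.add (h1.hasDerivAt.add ((hasDerivAt_id x).mul h2.hasDerivAt)))
      (by simp only [id_eq, one_mul])
  have G4 : deriv (deriv (deriv (deriv g))) =ᶠ[nhds (0:ℂ)] fun w =>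
      deriv (deriv (deriv (fun w => 1 - (1 + lamc) * φ w + lamc * φ w ^ 2))) w
        + (deriv (deriv (deriv (fun w => 1 - (1 + lamc) * φ w + lamc * φ w ^ 2))) w
          + (deriv (deriv (deriv (fun w => 1 - (1 + lamc) * φ w + lamc * φ w ^ 2))) w
            + (deriv (deriv (deriv (fun w => 1 - (1 + lamc) * φ w + lamc * φ w ^ 2))) w
              + w * deriv (deriv (deriv (deriv
                  (fun w => 1 - (1 + lamc) * φ w + lamc * φ w ^ 2)))) w))) := by
    refine G3.deriv.trans ?_
    filter_upwards [ev_diff' hψ2, ev_diff' hψ3] with x h2 h3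
    exact hasDerivAt_deriv_eq
      (h2.hasDerivAt.add (h2.hasDerivAt.add (h2.hasDerivAt.add
        ((hasDerivAt_id x).mul h3.hasDerivAt))))
      (by simp only [id_eq, one_mul])
  -- values at 0
  have b1 : deriv (fun w => 1 - (1 + lamc) * φ w + lamc * φ w ^ 2) 0
      = -(1 + lamc) * deriv φ 0 := by simpa [hφ0] using B1.self_of_nhds
  have b2 : deriv (deriv (fun w => 1 - (1 + lamc) * φ w + lamc * φ w ^ 2)) 0
      = -(1 + lamc) * deriv (deriv φ) 0 + lamc * (2 * deriv φ 0 ^ 2) := by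
    simpa [hφ0] using B2.self_of_nhds
  have b3 : deriv (deriv (deriv (fun w => 1 - (1 + lamc) * φ w + lamc * φ w ^ 2))) 0
      = -(1 + lamc) * deriv (deriv (deriv φ)) 0
        + lamc * (6 * deriv φ 0 * deriv (deriv φ) 0) := by
    simpa [hφ0] using B3.self_of_nhds
  have i2 : ∀ F : ℂ → ℂ, iteratedDeriv 2 F = deriv (deriv F) := by
    intro F; simp [iteratedDeriv_succ, iteratedDeriv_one]
  have i3 : ∀ F : ℂ → ℂ, iteratedDeriv 3 F = deriv (deriv (deriv F)) := by
    intro F; simp [iteratedDeriv_succ, iteratedDeriv_one]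
  have i4 : ∀ F : ℂ → ℂ, iteratedDeriv 4 F = deriv (deriv (deriv (deriv F))) := by
    intro F; simp [iteratedDeriv_succ, iteratedDeriv_one]
  refine ⟨by simpa [hφ0] using G1.self_of_nhds, ?_, ?_, ?_⟩
  · rw [i2 g]
    have := G2.self_of_nhds
    simp only [zero_mul, add_zero] at this
    rw [this, b1]; ring
  · rw [i3 g, i2 φ]
    have := G3.self_of_nhds
    simp only [zero_mul, add_zero] at this
    rw [this, b2]; ring
  · rw [i4 g, i3 φ, i2 φ]
    have := G4.self_of_nhds
    simp only [zero_mul, add_zero] at this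
    rw [this, b3]; ring

private lemma ev_deriv_comp (u g : ℂ → ℂ) (hu : AnalyticAt ℂ u 0) (hg : AnalyticAt ℂ g 0)
    (h0 : g 0 = 0) :
    deriv (fun w => u (g w)) =ᶠ[nhds (0:ℂ)] fun w => deriv u (g w) * deriv g w := by
  have h1 : ∀ᶠ y in nhds (0:ℂ), DifferentiableAt ℂ u y := ev_diff' hu
  have ht : Filter.Tendsto g (nhds 0) (nhds 0) := by
    have := hg.continuousAt
    rwa [ContinuousAt, h0] at this
  have h2 : ∀ᶠ x in nhds (0:ℂ), DifferentiableAt ℂ u (g x) := ht.eventually h1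
  filter_upwards [h2, ev_diff' hg] with x hx hgx
  exact deriv_comp x hx hgx

private lemma comp_derivs (ω g : ℂ → ℂ) (hω : AnalyticAt ℂ ω 0) (hg : AnalyticAt ℂ g 0)
    (h0 : g 0 = 0) :
    deriv (fun w => ω (g w)) 0 = deriv ω 0 * deriv g 0 ∧
    iteratedDeriv 2 (fun w => ω (g w)) 0 =
      iteratedDeriv 2 ω 0 * (deriv g 0)^2 + deriv ω 0 * iteratedDeriv 2 g 0 ∧
    iteratedDeriv 3 (fun w => ω (g w)) 0 =
      iteratedDeriv 3 ω 0 * (deriv g 0)^3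
        + 3 * iteratedDeriv 2 ω 0 * deriv g 0 * iteratedDeriv 2 g 0
        + deriv ω 0 * iteratedDeriv 3 g 0 := by
  have hω1 : AnalyticAt ℂ (deriv ω) 0 := analyticAt_deriv' hω
  have hω2 : AnalyticAt ℂ (deriv (deriv ω)) 0 := analyticAt_deriv' hω1
  have hωg0 : AnalyticAt ℂ ω (g 0) := by rwa [h0]
  have hω1g0 : AnalyticAt ℂ (deriv ω) (g 0) := by rwa [h0]
  have hω2g0 : AnalyticAt ℂ (deriv (deriv ω)) (g 0) := by rwa [h0]
  have hU1 : AnalyticAt ℂ (fun w => deriv ω (g w)) 0 := hω1g0.comp hg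
  have hU2 : AnalyticAt ℂ (fun w => deriv (deriv ω) (g w)) 0 := hω2g0.comp hg
  have hg1 : AnalyticAt ℂ (deriv g) 0 := analyticAt_deriv' hg
  have hg2 : AnalyticAt ℂ (deriv (deriv g)) 0 := analyticAt_deriv' hg1
  have E1 : deriv (fun w => ω (g w)) =ᶠ[nhds (0:ℂ)] fun w => deriv ω (g w) * deriv g w :=
    ev_deriv_comp ω g hω hg h0
  have Eb : deriv (fun w => deriv ω (g w)) =ᶠ[nhds (0:ℂ)]
      fun w => deriv (deriv ω) (g w) * deriv g w := ev_deriv_comp (deriv ω) g hω1 hg h0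
  have Ec : deriv (fun w => deriv (deriv ω) (g w)) =ᶠ[nhds (0:ℂ)]
      fun w => deriv (deriv (deriv ω)) (g w) * deriv g w :=
    ev_deriv_comp (deriv (deriv ω)) g hω2 hg h0
  have E2 : deriv (deriv (fun w => ω (g w))) =ᶠ[nhds (0:ℂ)]
      fun w => deriv (deriv ω) (g w) * (deriv g w)^2 + deriv ω (g w) * deriv (deriv g) w := by
    refine E1.deriv.trans ?_
    filter_upwards [Eb, ev_diff' hU1, ev_diff' hg1] with x hEb hU hg1x
    exact hasDerivAt_deriv_eq (hU.hasDerivAt.mul hg1x.hasDerivAt) (by rw [hEb]; ring)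
  have E3 : deriv (deriv (deriv (fun w => ω (g w)))) =ᶠ[nhds (0:ℂ)]
      fun w => deriv (deriv (deriv ω)) (g w) * (deriv g w)^3
        + 3 * deriv (deriv ω) (g w) * deriv g w * deriv (deriv g) w
        + deriv ω (g w) * deriv (deriv (deriv g)) w := by
    refine E2.deriv.trans ?_
    filter_upwards [Eb, Ec, ev_diff' hU1, ev_diff' hU2, ev_diff' hg1, ev_diff' hg2] with x hEb hEc hU1x hU2x hg1x hg2x
    exact hasDerivAt_deriv_eq
      ((hU2x.hasDerivAt.mul (hg1x.hasDerivAt.pow 2)).add (hU1x.hasDerivAt.mul hg2x.hasDerivAt))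
      (by rw [hEb, hEc]; push_cast; simp only [Pi.pow_apply]; ring)
  have i2 : ∀ F : ℂ → ℂ, iteratedDeriv 2 F = deriv (deriv F) := by
    intro F; simp [iteratedDeriv_succ, iteratedDeriv_one]
  have i3 : ∀ F : ℂ → ℂ, iteratedDeriv 3 F = deriv (deriv (deriv F)) := by
    intro F; simp [iteratedDeriv_succ, iteratedDeriv_one]
  refine ⟨by simpa [h0] using E1.self_of_nhds, ?_, ?_⟩
  · simp only [i2]; simpa [h0] using E2.self_of_nhds
  · simp only [i2, i3]; simpa [h0] using E3.self_of_nhds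

/-- Coefficients of the inverse of f(z) = z/((1-ω(z))(1-λω(z))) in terms of the
coefficients of the Schwarz function ω. -/
theorem inverse_coefficients_of_f (lam : ℝ) (hl0 : 0 < lam) (hl1 : lam ≤ 1)
    (ω : ℂ → ℂ)
    (hω : DifferentiableOn ℂ ω (ball (0:ℂ) 1))
    (h0 : ω 0 = 0)
    (hb : ∀ z ∈ ball (0:ℂ) 1, ‖ω z‖ < 1)
    (c₁ c₂ c₃ : ℂ)
    (hc₁ : c₁ = deriv ω 0)
    (hc₂ : c₂ = iteratedDeriv 2 ω 0 / 2)
    (hc₃ : c₃ = iteratedDeriv 3 ω 0 / 6)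
    (f g : ℂ → ℂ)
    (hf : ∀ z ∈ ball (0:ℂ) 1, f z = z / ((1 - ω z) * (1 - (lam:ℂ) * ω z)))
    (hg : AnalyticAt ℂ g 0) (hg0 : g 0 = 0)
    (hinv : ∀ᶠ w in nhds (0:ℂ), f (g w) = w)
    (A₂ A₃ A₄ : ℂ)
    (hA₂ : A₂ = iteratedDeriv 2 g 0 / 2)
    (hA₃ : A₃ = iteratedDeriv 3 g 0 / 6)
    (hA₄ : A₄ = iteratedDeriv 4 g 0 / 24) :
    A₂ = -(1 + (lam:ℂ)) * c₁ ∧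
    A₃ = -(1 + (lam:ℂ)) * c₂ + (1 + 3*(lam:ℂ) + (lam:ℂ)^2) * c₁ ^ 2 ∧
    A₄ = -(1 + (lam:ℂ)) * c₃ + (3 + 8*(lam:ℂ) + 3*(lam:ℂ)^2) * c₁ * c₂ -
      (1 + (lam:ℂ)) * (1 + 5*(lam:ℂ) + (lam:ℂ)^2) * c₁ ^ 3 := by
  have hωa : AnalyticAt ℂ ω 0 := hω.analyticAt (isOpen_ball.mem_nhds (by simp))
  have hωg0 : AnalyticAt ℂ ω (g 0) := by rwa [hg0]
  have hφ : AnalyticAt ℂ (fun w => ω (g w)) 0 := hωg0.comp hg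
  have hφ0 : (fun w => ω (g w)) 0 = 0 := by simp [hg0, h0]
  have ht : Filter.Tendsto g (nhds 0) (nhds 0) := by
    have := hg.continuousAt
    rwa [ContinuousAt, hg0] at this
  have hball : ∀ᶠ w in nhds (0:ℂ), g w ∈ ball (0:ℂ) 1 :=
    ht (isOpen_ball.mem_nhds (by simp))
  have hfeq : g =ᶠ[nhds (0:ℂ)]
      fun w => w * (1 - (1 + (lam:ℂ)) * ω (g w) + (lam:ℂ) * ω (g w) ^ 2) := by
    filter_upwards [hball, hinv] with w hw he
    have h1 := hf (g w) hw
    have hn := hb (g w) hw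
    have hd1 : (1:ℂ) - ω (g w) ≠ 0 := by
      refine sub_ne_zero.mpr ?_
      intro h
      rw [← h] at hn
      simp at hn
    have hd2 : (1:ℂ) - (lam:ℂ) * ω (g w) ≠ 0 := by
      refine sub_ne_zero.mpr ?_
      intro h
      have hnl : ‖(lam:ℂ)‖ = lam := by
        simp [abs_of_pos hl0]
      have hlt : ‖(lam:ℂ) * ω (g w)‖ < 1 := by
        rw [norm_mul, hnl]
        nlinarith [norm_nonneg (ω (g w))]
      rw [← h] at hlt
      simp at hlt
    have h2 : g w / ((1 - ω (g w)) * (1 - (lam:ℂ) * ω (g w))) = w := by rw [← h1]; exact he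
    have h3 : g w = w * ((1 - ω (g w)) * (1 - (lam:ℂ) * ω (g w))) :=
      (div_eq_iff (mul_ne_zero hd1 hd2)).mp h2
    conv_lhs => rw [h3]
    ring
  obtain ⟨m1, m2, m3, m4⟩ := master_vals ((lam:ℂ)) (fun w => ω (g w)) hφ hφ0 g hfeq
  obtain ⟨e1, e2, e3⟩ := comp_derivs ω g hωa hg hg0
  have hω2v : iteratedDeriv 2 ω 0 = 2 * c₂ := by rw [hc₂]; ring
  have hω3v : iteratedDeriv 3 ω 0 = 6 * c₃ := by rw [hc₃]; ring
  have hD1 : deriv (fun w => ω (g w)) 0 = c₁ := by rw [e1, m1, mul_one, ← hc₁]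
  have hG2 : iteratedDeriv 2 g 0 = -2 * (1 + (lam:ℂ)) * c₁ := by rw [m2, hD1]; ring
  have hD2 : iteratedDeriv 2 (fun w => ω (g w)) 0
      = 2 * c₂ - 2 * (1 + (lam:ℂ)) * c₁ ^ 2 := by
    rw [e2, hω2v, m1, hG2, ← hc₁]; ring
  have hG3 : iteratedDeriv 3 g 0
      = -6 * (1 + (lam:ℂ)) * c₂ + (6 * (1 + (lam:ℂ)) ^ 2 + 6 * (lam:ℂ)) * c₁ ^ 2 := by
    rw [m3, hD2, hD1]; ring
  have hD3 : iteratedDeriv 3 (fun w => ω (g w)) 0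
      = 6 * c₃ - 18 * (1 + (lam:ℂ)) * c₁ * c₂
        + (6 * (1 + (lam:ℂ)) ^ 2 + 6 * (lam:ℂ)) * c₁ ^ 3 := by
    rw [e3, hω3v, hω2v, m1, hG2, hG3, ← hc₁]; ring
  refine ⟨?_, ?_, ?_⟩
  · rw [hA₂, hG2]; ring
  · rw [hA₃, hG3]; ring
  · rw [hA₄, m4, hD3, hD1, hD2]; ring
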